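/- Let k be a commutative ring, G a finite group and g ≥ 1, and let π₁(Σ) be the presented group ⟨α₁,β₁,…,α_g,β_g | [β_g⁻¹,α_g]⋯[β₁⁻¹,α₁]⟩. Let M be the free k-module on the set G^{2g}, let N ⊆ M be the k-submodule spanned by all elements x − h·x, where h ∈ G acts on x ∈ G^{2g} by simultaneous conjugation, and let q: M → M/N be the quotient map. Let S = {(a₁, b₁, …, a_g, b_g) ∈ G^{2g} : [b_g⁻¹, a_g]·…·[b₁⁻¹, a₁] = 1}. Then the image q(⟨S⟩_k) of the k-span of S is a free k-module with basis in bijection with the orbit set S/G ≅ Hom(π₁(Σ), G)/G, the basis element for an orbit being q(x) for any representative x of the orbit. In other words, the protected object for the group algebra k[G] as a Hopf monoid in k-Mod and the surface Σ is the free k-module generated by the representation variety Hom(π₁(Σ), G)/G. -/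

import Mathlib

open scoped commutatorElement

/-- The standard relator `[β_g⁻¹, α_g] ⋯ [β₁⁻¹, α₁]` of the fundamental group of the closed
oriented surface of genus `g`. -/
def surfaceRelator (g : ℕ) : FreeGroup (Fin g × Bool) :=
  ((List.ofFn fun i : Fin g =>
    ⁅(FreeGroup.of (i, true))⁻¹, FreeGroup.of (i, false)⁆).reverse).prod

/-- The fundamental group of the closed oriented surface of genus `g`. -/
def SurfaceGroup (g : ℕ) : Type :=
  PresentedGroup {surfaceRelator g}

noncomputable instance (g : ℕ) : Group (SurfaceGroup g) :=
  inferInstanceAs (Group (PresentedGroup {surfaceRelator g}))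

/-- The generator `αᵢ` of the surface group. -/
def SurfaceGroup.a {g : ℕ} (i : Fin g) : SurfaceGroup g :=
  PresentedGroup.of (i, false)

/-- The generator `βᵢ` of the surface group. -/
def SurfaceGroup.b {g : ℕ} (i : Fin g) : SurfaceGroup g :=
  PresentedGroup.of (i, true)

/-- Simultaneous conjugation of a `2g`-tuple by a group element. -/
def conjTuple {G : Type*} [Group G] {g : ℕ} (h : G) (v : Fin g → G × G) : Fin g → G × G :=
  fun i => (h * (v i).1 * h⁻¹, h * (v i).2 * h⁻¹)

/-- The set of tuples `(a₁, b₁, …, a_g, b_g) ∈ G^{2g}` satisfying the surface relation. -/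
def surfaceTupleSet (g : ℕ) (G : Type*) [Group G] : Set (Fin g → G × G) :=
  { v | ((List.ofFn fun i : Fin g => ⁅((v i).2)⁻¹, (v i).1⁆).reverse).prod = 1 }

/-- Pointwise conjugation of group homomorphisms by a single element. -/
def conjHomRel (G H : Type*) [Group G] [Group H] : (G →* H) → (G →* H) → Prop :=
  fun ρ ρ' => ∃ h : H, ∀ x : G, ρ' x = h * ρ x * h⁻¹

section Aux

variable {G : Type*} [Group G] {g : ℕ}

/-- The tuple associated to a homomorphism. -/
noncomputable def tupleOf (ρ : SurfaceGroup g →* G) : Fin g → G × G :=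
  fun i => (ρ (SurfaceGroup.a i), ρ (SurfaceGroup.b i))

lemma tupleOf_mem (ρ : SurfaceGroup g →* G) : tupleOf ρ ∈ surfaceTupleSet g G := by
  have h1 : (ρ.comp (PresentedGroup.mk {surfaceRelator g}))
      (((List.ofFn fun i : Fin g =>
        ⁅(FreeGroup.of (i, true))⁻¹, FreeGroup.of (i, false)⁆).reverse).prod) = 1 := by
    have : PresentedGroup.mk {surfaceRelator g} (surfaceRelator g) = 1 := by
      have := Subgroup.subset_normalClosure (s := {surfaceRelator g}) rfl
      exact (QuotientGroup.eq_one_iff _).2 this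
    show ρ (PresentedGroup.mk {surfaceRelator g} (surfaceRelator g)) = 1
    rw [this]
    exact map_one ρ
  rw [map_list_prod, List.map_reverse, List.map_ofFn] at h1
  show ((List.ofFn fun i : Fin g => ⁅((tupleOf ρ i).2)⁻¹, (tupleOf ρ i).1⁆).reverse).prod = 1
  simp only [Function.comp_def, map_commutatorElement, map_inv, tupleOf,
    SurfaceGroup.a, SurfaceGroup.b, PresentedGroup.of] at h1 ⊢
  exact h1

/-- The function on generators associated to a tuple. -/
def funOf (v : Fin g → G × G) : Fin g × Bool → G :=
  fun p => if p.2 then (v p.1).2 else (v p.1).1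

lemma funOf_rel {v : Fin g → G × G} (hv : v ∈ surfaceTupleSet g G) :
    ∀ r ∈ ({surfaceRelator g} : Set (FreeGroup (Fin g × Bool))),
      FreeGroup.lift (funOf v) r = 1 := by
  rintro r rfl
  unfold surfaceRelator
  rw [map_list_prod, List.map_reverse, List.map_ofFn]
  have hv' : ((List.ofFn fun i : Fin g => ⁅((v i).2)⁻¹, (v i).1⁆).reverse).prod = 1 := hv
  simpa [Function.comp_def, map_commutatorElement, funOf] using hv'

/-- The homomorphism associated to a tuple. -/
def homOf {v : Fin g → G × G} (hv : v ∈ surfaceTupleSet g G) : SurfaceGroup g →* G :=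
  PresentedGroup.toGroup (funOf_rel hv)

lemma tupleOf_homOf {v : Fin g → G × G} (hv : v ∈ surfaceTupleSet g G) :
    tupleOf (homOf hv) = v := by
  funext i
  show (_, _) = v i
  rw [Prod.ext_iff]
  constructor
  · exact PresentedGroup.toGroup.of (funOf_rel hv)
  · exact PresentedGroup.toGroup.of (funOf_rel hv)

lemma homOf_tupleOf (ρ : SurfaceGroup g →* G) : homOf (tupleOf_mem ρ) = ρ := by
  apply PresentedGroup.ext
  rintro ⟨i, b⟩
  cases b
  · exact PresentedGroup.toGroup.of (funOf_rel (tupleOf_mem ρ))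
  · exact PresentedGroup.toGroup.of (funOf_rel (tupleOf_mem ρ))

end Aux

section Aux2

variable {G : Type*} [Group G] {g : ℕ}

lemma conjTuple_one (v : Fin g → G × G) : conjTuple 1 v = v := by
  funext i; simp [conjTuple]

lemma conjTuple_mul (h₁ h₂ : G) (v : Fin g → G × G) :
    conjTuple h₁ (conjTuple h₂ v) = conjTuple (h₁ * h₂) v := by
  funext i; simp [conjTuple, mul_assoc]

/-- The setoid of simultaneous conjugation on tuples. -/
def conjSetoid (G : Type*) [Group G] (g : ℕ) : Setoid (Fin g → G × G) where
  r x y := ∃ h : G, y = conjTuple h x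
  iseqv := by
    refine ⟨fun x => ⟨1, (conjTuple_one x).symm⟩, ?_, ?_⟩
    · rintro x y ⟨h, rfl⟩
      exact ⟨h⁻¹, by rw [conjTuple_mul, inv_mul_cancel, conjTuple_one]⟩
    · rintro x y z ⟨h₁, rfl⟩ ⟨h₂, rfl⟩
      exact ⟨h₂ * h₁, by rw [conjTuple_mul]⟩

lemma tupleOf_conj (ρ : SurfaceGroup g →* G) (h : G) :
    conjTuple h (tupleOf ρ) = tupleOf (((MulAut.conj h).toMonoidHom).comp ρ) := by
  funext i; rfl

lemma conjHomRel_of_tuple {ρ ρ' : SurfaceGroup g →* G} {h : G}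
    (hc : tupleOf ρ' = conjTuple h (tupleOf ρ)) : conjHomRel (SurfaceGroup g) G ρ ρ' := by
  refine ⟨h, fun x => ?_⟩
  have : ρ' = ((MulAut.conj h).toMonoidHom).comp ρ := by
    rw [tupleOf_conj] at hc
    apply PresentedGroup.ext
    rintro ⟨i, b⟩
    have := congrFun hc i
    cases b
    · exact (Prod.ext_iff.1 this).1
    · exact (Prod.ext_iff.1 this).2
  rw [this]; rfl

lemma tuple_of_conjHomRel {ρ ρ' : SurfaceGroup g →* G}
    (hr : conjHomRel (SurfaceGroup g) G ρ ρ') :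
    ∃ h : G, tupleOf ρ' = conjTuple h (tupleOf ρ) := by
  obtain ⟨h, hh⟩ := hr
  exact ⟨h, by funext i; simp [tupleOf, conjTuple, hh]⟩

end Aux2

/-- Let `k` be a commutative ring, `G` a finite group and `g ≥ 1`.  Let
`M = k⟨G^{2g}⟩` be the free `k`-module on `G^{2g}`, `N ⊆ M` the submodule spanned by the
elements `x − h·x` (simultaneous conjugation) and `q : M → M/N` the quotient map.  Then the
image under `q` of the `k`-span of the set `S` of tuples satisfying the surface relation is a
free `k`-module with basis indexed by `Hom(π₁(Σ), G)/G ≅ S/G`, the basis element of the class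
of `ρ` being `q(x)` for the corresponding representative tuple `x ∈ S`.  This is the protected
object for the group algebra `k[G]` as a Hopf monoid in `k`-Mod and the genus-`g` surface. -/
theorem groupAlgebra_protected_object_free_on_repVariety
    (k : Type*) [CommRing k] (G : Type*) [Group G] [Finite G] (g : ℕ) (hg : 1 ≤ g)
    (N : Submodule k ((Fin g → G × G) →₀ k))
    (hN : N = Submodule.span k
      { z | ∃ (x : Fin g → G × G) (h : G),
          z = Finsupp.single x (1 : k) - Finsupp.single (conjTuple h x) (1 : k) }) :
    ∃ (e : (SurfaceGroup g →* G) ≃ surfaceTupleSet g G)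
      (bas : Module.Basis (Quot (fun ρ ρ' : SurfaceGroup g →* G => conjHomRel (SurfaceGroup g) G ρ ρ'))
        k (Submodule.map N.mkQ
            (Submodule.span k ((fun v : Fin g → G × G => Finsupp.single v (1 : k)) ''
              surfaceTupleSet g G)))),
      (∀ (ρ : SurfaceGroup g →* G) (i : Fin g),
        ((e ρ : Fin g → G × G) i) = (ρ (SurfaceGroup.a i), ρ (SurfaceGroup.b i))) ∧
      (∀ ρ : SurfaceGroup g →* G,
        ((bas (Quot.mk _ ρ) : ((Fin g → G × G) →₀ k) ⧸ N)) =
          N.mkQ (Finsupp.single (e ρ : Fin g → G × G) (1 : k))) := by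
  classical
  -- the equivalence
  set e : (SurfaceGroup g →* G) ≃ surfaceTupleSet g G :=
    { toFun := fun ρ => ⟨tupleOf ρ, tupleOf_mem ρ⟩
      invFun := fun v => homOf v.2
      left_inv := fun ρ => homOf_tupleOf ρ
      right_inv := fun v => Subtype.ext (tupleOf_homOf v.2) } with he
  -- mkQ kills conjugation differences
  have hkill : ∀ (x : Fin g → G × G) (h : G),
      N.mkQ (Finsupp.single x (1 : k)) = N.mkQ (Finsupp.single (conjTuple h x) (1 : k)) := by
    intro x h
    rw [← sub_eq_zero, ← map_sub, Submodule.mkQ_apply, Submodule.Quotient.mk_eq_zero, hN]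
    exact Submodule.subset_span ⟨x, h, rfl⟩
  -- the quotient map to orbit Finsupp
  set φ : ((Fin g → G × G) →₀ k) →ₗ[k] (Quotient (conjSetoid G g) →₀ k) :=
    Finsupp.lmapDomain k k (Quotient.mk (conjSetoid G g)) with hφ
  have hNker : N ≤ LinearMap.ker φ := by
    rw [hN, Submodule.span_le]
    rintro z ⟨x, h, rfl⟩
    simp only [SetLike.mem_coe, LinearMap.mem_ker, map_sub, hφ, Finsupp.lmapDomain_apply,
      Finsupp.mapDomain_single]
    rw [sub_eq_zero]
    congr 1
    exact Quotient.sound ⟨h, rfl⟩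
  set φ' : (((Fin g → G × G) →₀ k) ⧸ N) →ₗ[k] (Quotient (conjSetoid G g) →₀ k) :=
    N.liftQ φ hNker with hφ'
  -- the candidate basis family in the quotient module
  set c : Quot (fun ρ ρ' : SurfaceGroup g →* G => conjHomRel (SurfaceGroup g) G ρ ρ') →
      (((Fin g → G × G) →₀ k) ⧸ N) :=
    Quot.lift (fun ρ => N.mkQ (Finsupp.single (tupleOf ρ) (1 : k)))
      (by
        intro ρ ρ' hr
        obtain ⟨h, hh⟩ := tuple_of_conjHomRel hr
        show N.mkQ (Finsupp.single (tupleOf ρ) (1 : k)) =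
          N.mkQ (Finsupp.single (tupleOf ρ') (1 : k))
        rw [hh]
        exact hkill _ _) with hc
  -- the injective index map into orbits
  set j : Quot (fun ρ ρ' : SurfaceGroup g →* G => conjHomRel (SurfaceGroup g) G ρ ρ') →
      Quotient (conjSetoid G g) :=
    Quot.lift (fun ρ => Quotient.mk (conjSetoid G g) (tupleOf ρ))
      (by
        intro ρ ρ' hr
        obtain ⟨h, hh⟩ := tuple_of_conjHomRel hr
        have : Quotient.mk (conjSetoid G g) (tupleOf ρ') =
            Quotient.mk (conjSetoid G g) (tupleOf ρ) :=
          Quotient.sound ⟨h⁻¹, by rw [hh, conjTuple_mul, inv_mul_cancel, conjTuple_one]⟩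
        exact this.symm) with hj
  have hjinj : Function.Injective j := by
    intro q q' hqq
    induction q using Quot.ind with
    | _ ρ =>
      induction q' using Quot.ind with
      | _ ρ' =>
        have hex : ∃ h : G, tupleOf ρ' = conjTuple h (tupleOf ρ) :=
          Quotient.exact hqq
        obtain ⟨h, hh⟩ := hex
        exact Quot.sound (conjHomRel_of_tuple hh)
  -- φ' ∘ c is the family of distinct singles
  have hcomp : ∀ q, φ' (c q) = Finsupp.single (j q) (1 : k) := by
    intro q
    induction q using Quot.ind with
    | _ ρ =>
      show φ' (N.mkQ (Finsupp.single (tupleOf ρ) (1 : k))) = _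
      rw [hφ', Submodule.mkQ_apply, Submodule.liftQ_apply, hφ, Finsupp.lmapDomain_apply,
        Finsupp.mapDomain_single]
  -- linear independence
  have hli : LinearIndependent k c := by
    have hli2 : LinearIndependent k (fun q => Finsupp.single (j q) (1 : k)) :=
      (Finsupp.basisSingleOne (ι := Quotient (conjSetoid G g)) (R := k)).linearIndependent.comp
        j hjinj
    apply LinearIndependent.of_comp φ'
    have heq : (fun q => φ' (c q)) = fun q => Finsupp.single (j q) (1 : k) := funext hcomp
    show LinearIndependent k (fun q => φ' (c q))
    rw [heq]
    exact hli2
  -- the span of the family is the target submodule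
  have hrange : Set.range c =
      (N.mkQ ∘ fun v : Fin g → G × G => Finsupp.single v (1 : k)) '' surfaceTupleSet g G := by
    ext y
    constructor
    · rintro ⟨q, rfl⟩
      induction q using Quot.ind with
      | _ ρ => exact ⟨tupleOf ρ, tupleOf_mem ρ, rfl⟩
    · rintro ⟨v, hv, rfl⟩
      refine ⟨Quot.mk _ (homOf hv), ?_⟩
      show N.mkQ (Finsupp.single (tupleOf (homOf hv)) (1 : k)) = _
      rw [tupleOf_homOf hv]
      rfl
  have hspan : Submodule.span k (Set.range c) =
      Submodule.map N.mkQ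
        (Submodule.span k ((fun v : Fin g → G × G => Finsupp.single v (1 : k)) ''
          surfaceTupleSet g G)) := by
    rw [Submodule.map_span, hrange, Set.image_image]
    rfl
  -- assemble the basis
  set bas := (Module.Basis.span hli).map (LinearEquiv.ofEq _ _ hspan) with hbas
  refine ⟨e, bas, fun ρ i => rfl, fun ρ => ?_⟩
  show ((bas (Quot.mk _ ρ) : ((Fin g → G × G) →₀ k) ⧸ N)) =
    N.mkQ (Finsupp.single (tupleOf ρ) (1 : k))
  rw [hbas, Module.Basis.map_apply]
  rw [LinearEquiv.coe_ofEq_apply, Module.Basis.span_apply]
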